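/- Let H be a subgroup of G whose orientation states form an orthonormal basis of the frame space, and for a character ψ : H →* ℂˣ set A_ψ := ∑_{h ∈ H} conj (ψ h) • Q h and the coarse-grained sector projector Π_ψ := (Nat.card H : ℂ)⁻¹ • ∑_{h ∈ H} conj (ψ h) • ((U_R h) ⊗ₖ (U_S h)). Then Π_ψ * A_ψ * Π = A_ψ * Π; that is, A_ψ maps the G-invariant (physical) subspace into the H-isotype (coarse-grained charge sector) labelled by ψ. -/

import Mathlib

open scoped Kronecker
open Matrix

/-- For a subgroup `H ≤ G` whose orientation states form an orthonormal
basis, the operator `A_ψ := ∑_{h ∈ H} conj (ψ h) • Q h` maps the `G`-invariant subspace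
into the coarse-grained `H`-charge sector labelled by `ψ`:  `Π_ψ * A_ψ * Π = A_ψ * Π`,
where `Π_ψ := |H|⁻¹ • ∑_{h ∈ H} conj (ψ h) • (U_R h ⊗ₖ U_S h)`. -/
theorem A_psi_maps_into_coarse_grained_sector
    {G : Type*} [CommGroup G] [Fintype G] [DecidableEq G] {r s : ℕ}
    (U_R : G → Matrix (Fin r) (Fin r) ℂ)
    (U_S : G → Matrix (Fin s) (Fin s) ℂ)
    (hR_mul : ∀ g h : G, U_R (g * h) = U_R g * U_R h)
    (hR_one : U_R 1 = 1)
    (hR_unitary : ∀ g : G, (U_R g)ᴴ * U_R g = 1)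
    (hS_mul : ∀ g h : G, U_S (g * h) = U_S g * U_S h)
    (hS_one : U_S 1 = 1)
    (hS_unitary : ∀ g : G, (U_S g)ᴴ * U_S g = 1)
    (φ : G → (Fin r → ℂ))
    (hcov : ∀ g h : G, (U_R h).mulVec (φ g) = φ (h * g))
    (Pg : Matrix (Fin r × Fin s) (Fin r × Fin s) ℂ)
    (hPg : Pg = (Fintype.card G : ℂ)⁻¹ • ∑ g : G, (U_R g) ⊗ₖ (U_S g))
    (Q : G → Matrix (Fin r × Fin s) (Fin r × Fin s) ℂ)
    (hQ : ∀ g : G, Q g = (Matrix.vecMulVec (φ g) (star (φ g))) ⊗ₖ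
        (1 : Matrix (Fin s) (Fin s) ℂ))
    (H : Subgroup G) [Fintype H]
    (horthH : ∀ h h' : H,
      (∑ i : Fin r, star (φ (h : G) i) * φ (h' : G) i) = if h = h' then 1 else 0)
    (hcompleteH : ∑ h : H, Matrix.vecMulVec (φ (h : G)) (star (φ (h : G)))
        = (1 : Matrix (Fin r) (Fin r) ℂ))
    (ψ : H →* ℂˣ)
    (A : Matrix (Fin r × Fin s) (Fin r × Fin s) ℂ)
    (hA : A = ∑ h : H, star ((ψ h : ℂ)) • Q (h : G))
    (Pψ : Matrix (Fin r × Fin s) (Fin r × Fin s) ℂ)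
    (hPψ : Pψ = (Nat.card H : ℂ)⁻¹ •
        ∑ h : H, star ((ψ h : ℂ)) • ((U_R (h : G)) ⊗ₖ (U_S (h : G)))) :
    Pψ * A * Pg = A * Pg := by
  classical
  -- characters of a finite group have modulus one
  have hstar : ∀ k : H, star ((ψ k : ℂ)) * (ψ k : ℂ) = 1 := by
    intro k
    have hpow : ((ψ k : ℂ)) ^ (Fintype.card H) = 1 := by
      have h1 : (ψ k) ^ Fintype.card H = 1 := by
        rw [← MonoidHom.map_pow, pow_card_eq_one, MonoidHom.map_one]
      have h2 := congrArg (Units.val) h1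
      simpa using h2
    have hn : ‖(ψ k : ℂ)‖ = 1 :=
      Complex.norm_eq_one_of_pow_eq_one hpow Fintype.card_ne_zero
    rw [Complex.star_def, Complex.conj_mul', hn]
    norm_num
  have hinv : ∀ k : H, star ((ψ k : ℂ)) = ((ψ k : ℂ))⁻¹ := fun k =>
    eq_inv_of_mul_eq_one_left (hstar k)
  -- conjugate transpose is the inverse representation
  have hR_conj : ∀ g : G, (U_R g)ᴴ = U_R g⁻¹ := by
    intro g
    have h1 : (U_R g)⁻¹ = (U_R g)ᴴ := Matrix.inv_eq_left_inv (hR_unitary g)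
    have h2 : (U_R g)⁻¹ = U_R g⁻¹ :=
      Matrix.inv_eq_left_inv (by rw [← hR_mul, inv_mul_cancel, hR_one])
    rw [← h1, h2]
  -- intertwining of U_R with the rank-one projectors
  have key1 : ∀ k g : G, U_R k * Matrix.vecMulVec (φ g) (star (φ g))
      = Matrix.vecMulVec (φ (k * g)) (star (φ (k * g))) * U_R k := by
    intro k g
    have h1 : (U_R k).mulVec (φ g) = φ (k * g) := hcov g k
    have h2 : (U_R k⁻¹).mulVec (φ (k * g)) = φ g := by
      rw [hcov]; congr 1; group
    have h3 : ∀ j, star (φ g j) = ∑ m, star (φ (k * g) m) * U_R k m j := by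
      intro j
      have h4 : ((U_R k)ᴴ).mulVec (φ (k * g)) j = φ g j := by
        rw [hR_conj]; exact congrFun h2 j
      rw [← h4]
      simp [Matrix.mulVec, dotProduct, Matrix.conjTranspose_apply, Finset.mul_sum,
        mul_comm]
    ext i j
    simp only [Matrix.mul_apply, Matrix.vecMulVec_apply, Pi.star_apply]
    have hL : ∑ m, U_R k i m * (φ g m * star (φ g j))
        = (∑ m, U_R k i m * φ g m) * star (φ g j) := by
      rw [Finset.sum_mul]; apply Finset.sum_congr rfl; intros; ring
    have hsum : (∑ m, U_R k i m * φ g m) = φ (k * g) i := congrFun h1 i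
    rw [hL, hsum, h3 j, Finset.mul_sum]
    apply Finset.sum_congr rfl; intros; ring
  -- intertwining for the Kronecker operators Q
  have key2 : ∀ k g : G, (U_R k ⊗ₖ U_S k) * Q g = Q (k * g) * (U_R k ⊗ₖ U_S k) := by
    intro k g
    rw [hQ, hQ, ← Matrix.mul_kronecker_mul, ← Matrix.mul_kronecker_mul, key1, mul_one, one_mul]
  -- invariance of the gauge projector
  have key3 : ∀ g : G, (U_R g ⊗ₖ U_S g) * Pg = Pg := by
    intro g
    rw [hPg, Matrix.mul_smul, Finset.mul_sum]
    congr 1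
    refine Fintype.sum_equiv (Equiv.mulLeft g) _ _ ?_
    intro k
    rw [← Matrix.mul_kronecker_mul, ← hR_mul, ← hS_mul]
    rfl
  -- the key eigenvalue relation
  have key4 : ∀ k : H, (U_R (k : G) ⊗ₖ U_S (k : G)) * (A * Pg) = (ψ k : ℂ) • (A * Pg) := by
    intro k
    have expand : ∀ M : Matrix (Fin r × Fin s) (Fin r × Fin s) ℂ,
        M * (A * Pg) = ∑ h : H, star ((ψ h : ℂ)) • (M * Q (h : G) * Pg) := by
      intro M
      rw [hA, Finset.sum_mul, Finset.mul_sum]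
      apply Finset.sum_congr rfl
      intro h _
      simp only [Matrix.smul_mul, Matrix.mul_smul, Matrix.mul_assoc]
    rw [expand]
    have step : ∀ h : H, (U_R (k : G) ⊗ₖ U_S (k : G)) * Q (h : G) * Pg
        = Q ((k * h : H) : G) * Pg := by
      intro h
      rw [key2, Matrix.mul_assoc, key3]; rfl
    calc (∑ h : H, star ((ψ h : ℂ)) • ((U_R (k : G) ⊗ₖ U_S (k : G)) * Q (h : G) * Pg))
        = ∑ h : H, star ((ψ h : ℂ)) • (Q ((k * h : H) : G) * Pg) := by
          exact Finset.sum_congr rfl fun h _ => by rw [step]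
      _ = ∑ h : H, ((ψ k : ℂ) * star ((ψ h : ℂ))) • (Q (h : G) * Pg) := by
          refine Fintype.sum_equiv (Equiv.mulLeft (k : H)) _ _ ?_
          intro h
          simp only [Equiv.coe_mulLeft]
          have e2 : (ψ k : ℂ) * star ((ψ (k * h) : ℂ)) = star ((ψ h : ℂ)) := by
            have e3 : (ψ (k * h) : ℂ) = (ψ k : ℂ) * (ψ h : ℂ) := by
              rw [ψ.map_mul]; simp
            rw [e3, star_mul', ← mul_assoc, mul_comm ((ψ k : ℂ)) (star ((ψ k : ℂ))),
              hstar, one_mul]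
          rw [e2]
      _ = (ψ k : ℂ) • ∑ h : H, star ((ψ h : ℂ)) • (Q (h : G) * Pg) := by
          rw [Finset.smul_sum]
          exact Finset.sum_congr rfl fun h _ => (smul_smul _ _ _).symm
      _ = (ψ k : ℂ) • (A * Pg) := by
          congr 1
          rw [hA, Finset.sum_mul]
          exact Finset.sum_congr rfl fun h _ => (Matrix.smul_mul _ _ _).symm
  -- assemble
  rw [Matrix.mul_assoc, hPψ, Matrix.smul_mul, Finset.sum_mul]
  have : (∑ k : H, (star ((ψ k : ℂ)) • (U_R (k : G) ⊗ₖ U_S (k : G))) * (A * Pg))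
      = (Fintype.card H : ℂ) • (A * Pg) := by
    have : ∀ k : H, (star ((ψ k : ℂ)) • (U_R (k : G) ⊗ₖ U_S (k : G))) * (A * Pg)
        = A * Pg := by
      intro k
      rw [Matrix.smul_mul, key4, smul_smul, hstar, one_smul]
    rw [Finset.sum_congr rfl fun k _ => this k, Finset.sum_const, Finset.card_univ,
      ← Nat.cast_smul_eq_nsmul ℂ]
  rw [this, smul_smul, Nat.card_eq_fintype_card]
  rw [inv_mul_cancel₀ (by exact_mod_cast Fintype.card_ne_zero), one_smul]
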